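/- Let A be a Weil algebra of order ℓ and width m ≤ n, and fix a surjective ℝ-algebra homomorphism α : ℝ_n^ℓ → A, where ℝ_n^ℓ = ℝ[x₁,…,x_n]/(x₁,…,x_n)^{ℓ+1}. Then every surjective ℝ-algebra homomorphism β : ℝ_n^ℓ → A factors as β = α ∘ g for some ℝ-algebra automorphism g of ℝ_n^ℓ. -/

import Mathlib

open IsLocalRing

/-- The truncated polynomial algebra `ℝ_n^ℓ = ℝ[x₁,…,x_n]/(x₁,…,x_n)^{ℓ+1}`. -/
abbrev Rnl (n ℓ : ℕ) : Type :=
  MvPolynomial (Fin n) ℝ ⧸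
    ((Ideal.span (Set.range (MvPolynomial.X : Fin n → MvPolynomial (Fin n) ℝ))) ^ (ℓ + 1))



set_option synthInstance.maxHeartbeats 1000000
set_option maxHeartbeats 1000000
set_option linter.unusedSectionVars false
set_option linter.unusedVariables false

open Module Submodule Set in
lemma la_lemma {Q : Type*} [AddCommGroup Q] [Module ℝ Q] {n : ℕ}
    (V' K : Submodule ℝ Q) [FiniteDimensional ℝ V'] (hK : K ≤ V')
    (hn : finrank ℝ V' ≤ n) :
    ∀ (d : ℕ) (v : Fin n → Q), (∀ i, v i ∈ V') →
      span ℝ (range v) ⊔ K = V' →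
      finrank ℝ V' - finrank ℝ (span ℝ (range v)) ≤ d →
      ∃ w : Fin n → Q, (∀ i, w i ∈ K) ∧ span ℝ (range fun i => v i + w i) = V' := by
  intro d
  induction d with
  | zero =>
      intro v hv hspan hd
      have hle : span ℝ (range v) ≤ V' := span_le.mpr (range_subset_iff.mpr hv)
      haveI : FiniteDimensional ℝ (span ℝ (range v)) :=
        Submodule.finiteDimensional_of_le hle
      have h1 : finrank ℝ (span ℝ (range v)) ≤ finrank ℝ V' :=
        Submodule.finrank_mono hle
      have heq : span ℝ (range v) = V' :=
        Submodule.eq_of_le_of_finrank_le hle (by omega)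
      exact ⟨0, fun i => K.zero_mem, by simpa using heq⟩
  | succ d ih =>
      intro v hv hspan hd
      have hle : span ℝ (range v) ≤ V' := span_le.mpr (range_subset_iff.mpr hv)
      haveI : FiniteDimensional ℝ (span ℝ (range v)) :=
        Submodule.finiteDimensional_of_le hle
      by_cases htop : span ℝ (range v) = V'
      · exact ⟨0, fun i => K.zero_mem, by simpa using htop⟩
      · -- find k ∈ K \ span v
        have hKns : ¬ K ≤ span ℝ (range v) := by
          intro h
          exact htop (le_antisymm hle (hspan ▸ sup_le le_rfl h))
        obtain ⟨k, hkK, hkns⟩ := SetLike.not_le_iff_exists.mp hKns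
        -- find i with v i ∈ span of the others
        have hdep : ¬ LinearIndependent ℝ v := by
          intro hli
          have hcard : finrank ℝ (span ℝ (range v)) = n := by
            simpa using finrank_span_eq_card hli
          exact htop (Submodule.eq_of_le_of_finrank_le hle (by omega))
        have : ¬ ∀ i, v i ∉ span ℝ (v '' (univ \ {i})) := by
          intro h; exact hdep (linearIndependent_iff_notMem_span.mpr h)
        push_neg at this
        obtain ⟨i, hi⟩ := this
        set v' : Fin n → Q := Function.update v i (v i + k) with hv'
        have hv'mem : ∀ j, v' j ∈ V' := by
          intro j
          by_cases hj : j = i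
          · subst hj; rw [hv', Function.update_self]
            exact V'.add_mem (hv j) (hK hkK)
          · rw [hv', Function.update_of_ne hj]; exact hv j
        have hsub : span ℝ (range v) ≤ span ℝ (range v') := by
          rw [span_le]
          rintro - ⟨j, rfl⟩
          by_cases hj : j = i
          · subst hj
            refine Submodule.span_mono ?_ hi
            rintro - ⟨y, ⟨-, hy⟩, rfl⟩
            refine ⟨y, ?_⟩
            have hy' : ¬ y = j := by simpa using hy
            rw [hv', Function.update_of_ne hy']
          · exact subset_span ⟨j, by rw [hv', Function.update_of_ne hj]⟩
        have hkmem : k ∈ span ℝ (range v') := by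
          have h1 : v i + k ∈ span ℝ (range v') :=
            subset_span ⟨i, by rw [hv', Function.update_self]⟩
          have h2 : v i ∈ span ℝ (range v') := hsub (subset_span (mem_range_self i))
          simpa using sub_mem h1 h2
        have hlt : span ℝ (range v) < span ℝ (range v') :=
          lt_of_le_of_ne hsub (fun h => hkns (h ▸ hkmem))
        have hle' : span ℝ (range v') ≤ V' := span_le.mpr (range_subset_iff.mpr hv'mem)
        haveI : FiniteDimensional ℝ (span ℝ (range v')) :=
          Submodule.finiteDimensional_of_le hle'
        have hfr : finrank ℝ (span ℝ (range v)) < finrank ℝ (span ℝ (range v')) :=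
          Submodule.finrank_lt_finrank_of_lt hlt
        have hspan' : span ℝ (range v') ⊔ K = V' := by
          apply le_antisymm (sup_le hle' hK)
          rw [← hspan]
          refine sup_le ?_ le_sup_right
          rw [span_le]
          rintro - ⟨j, rfl⟩
          by_cases hj : j = i
          · subst hj
            have h1 : v' j ∈ span ℝ (range v') ⊔ K :=
              le_sup_left (α := Submodule ℝ Q) (subset_span (mem_range_self j))
            have h2 : k ∈ span ℝ (range v') ⊔ K := le_sup_right (α := Submodule ℝ Q) hkK
            have : v j = v' j - k := by rw [hv', Function.update_self]; abel
            rw [this]; exact sub_mem h1 h2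
          · exact le_sup_left (α := Submodule ℝ Q)
              (subset_span ⟨j, by rw [hv', Function.update_of_ne hj]⟩)
        have hd' : finrank ℝ V' - finrank ℝ (span ℝ (range v')) ≤ d := by
          have := Submodule.finrank_mono hle'
          omega
        obtain ⟨w', hw'K, hw'span⟩ := ih v' hv'mem hspan' hd'
        refine ⟨fun j => (v' j - v j) + w' j, ?_, ?_⟩
        · intro j
          show v' j - v j + w' j ∈ K
          by_cases hj : j = i
          · subst hj
            have : v' j - v j = k := by rw [hv', Function.update_self]; abel
            rw [this]; exact K.add_mem hkK (hw'K j)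
          · have : v' j - v j = 0 := by rw [hv', Function.update_of_ne hj]; abel
            rw [this, zero_add]; exact hw'K j
        · have : (fun j => v j + (v' j - v j + w' j)) = fun j => v' j + w' j := by
            funext j; abel
          rw [this]; exact hw'span


namespace WeilAux
open MvPolynomial Module Submodule Set

variable (n ℓ : ℕ)

/-- the ideal (X₁,…,Xₙ) -/
noncomputable def J : Ideal (MvPolynomial (Fin n) ℝ) :=
  Ideal.span (Set.range (MvPolynomial.X : Fin n → MvPolynomial (Fin n) ℝ))

/-- the quotient map as an algebra hom -/
noncomputable def π : MvPolynomial (Fin n) ℝ →ₐ[ℝ] Rnl n ℓ :=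
  Ideal.Quotient.mkₐ ℝ (J n ^ (ℓ + 1))

/-- the maximal ideal of `Rnl n ℓ` -/
noncomputable def Mi : Ideal (Rnl n ℓ) := (J n).map (π n ℓ)

variable {n ℓ}

lemma π_surjective : Function.Surjective (π n ℓ) :=
  Ideal.Quotient.mk_surjective

lemma sub_C_mem_J (p : MvPolynomial (Fin n) ℝ) :
    p - C (constantCoeff p) ∈ J n := by
  induction p using MvPolynomial.induction_on with
  | C a => simp
  | add p q hp hq =>
      have : p + q - C (constantCoeff (p + q)) =
        (p - C (constantCoeff p)) + (q - C (constantCoeff q)) := by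
        rw [map_add, map_add]; ring
      rw [this]; exact add_mem hp hq
  | mul_X p i _ =>
      have h1 : (X i : MvPolynomial (Fin n) ℝ) ∈ J n :=
        Ideal.subset_span (mem_range_self i)
      have : p * X i - C (constantCoeff (p * X i)) = p * X i := by
        simp [constantCoeff_X]
      rw [this]
      exact Ideal.mul_mem_left _ _ h1

lemma monomial_mem_J_pow (s : Fin n →₀ ℕ) (c : ℝ) (k : ℕ)
    (h : k ≤ s.sum fun _ e => e) : monomial s c ∈ J n ^ k := by
  have hprod : (s.prod fun i e => (X i : MvPolynomial (Fin n) ℝ) ^ e) ∈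
      J n ^ (s.sum fun _ e => e) := by
    classical
    rw [Finsupp.prod, Finsupp.sum]
    induction s.support using Finset.induction_on with
    | empty => simp
    | insert _ _ hx ih =>
        rename_i a t
        rw [Finset.prod_insert hx, Finset.sum_insert hx, pow_add]
        exact Ideal.mul_mem_mul
          (Ideal.pow_mem_pow (Ideal.subset_span (mem_range_self a)) _) ih
  rw [monomial_eq]
  exact Ideal.mul_mem_left _ _ (Ideal.pow_le_pow_right h hprod)


lemma π_ker (p : MvPolynomial (Fin n) ℝ) (hp : p ∈ J n ^ (ℓ + 1)) : π n ℓ p = 0 := by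
  show Ideal.Quotient.mk (J n ^ (ℓ + 1)) p = 0
  exact Ideal.Quotient.eq_zero_iff_mem.mpr hp

lemma Mi_pow_eq_bot : Mi n ℓ ^ (ℓ + 1) = ⊥ := by
  rw [Mi, ← Ideal.map_pow]
  have : (π n ℓ : MvPolynomial (Fin n) ℝ →+* Rnl n ℓ) =
      Ideal.Quotient.mk (J n ^ (ℓ + 1)) := rfl
  rw [Ideal.map, ← Ideal.map]
  exact le_bot_iff.mp (Ideal.map_le_iff_le_comap.mpr (fun x hx => by
    simp only [Ideal.mem_comap]
    simpa [Ideal.mem_bot] using π_ker x hx))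

lemma xq_mem_Mi (i : Fin n) : π n ℓ (X i) ∈ Mi n ℓ :=
  Ideal.mem_map_of_mem _ (Ideal.subset_span (mem_range_self i))

lemma mem_Mi_iff {z : Rnl n ℓ} : z ∈ Mi n ℓ ↔ ∃ p ∈ J n, π n ℓ p = z :=
  Ideal.mem_map_iff_of_surjective _ π_surjective

/-- decomposition z = c•1 + m with m ∈ Mi -/
lemma exists_decomp (z : Rnl n ℓ) :
    ∃ c : ℝ, ∃ m ∈ Mi n ℓ, z = algebraMap ℝ _ c + m := by
  obtain ⟨p, rfl⟩ := π_surjective (n := n) (ℓ := ℓ) z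
  refine ⟨constantCoeff p, π n ℓ (p - C (constantCoeff p)),
    Ideal.mem_map_of_mem _ (sub_C_mem_J p), ?_⟩
  rw [map_sub]
  have : π n ℓ (C (constantCoeff p)) = algebraMap ℝ _ (constantCoeff p) := by
    rfl
  rw [this]; ring


lemma finite_Rnl : Module.Finite ℝ (Rnl n ℓ) := by
  classical
  have inst : Module.Finite ℝ (restrictTotalDegree (Fin n) ℝ ℓ) := inferInstance
  refine Module.Finite.of_surjective
    ((π n ℓ).toLinearMap ∘ₗ (restrictTotalDegree (Fin n) ℝ ℓ).subtype) ?_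
  intro z
  obtain ⟨p, rfl⟩ := π_surjective (n := n) (ℓ := ℓ) z
  set q : MvPolynomial (Fin n) ℝ :=
    ∑ s ∈ p.support.filter (fun s => (s.sum fun _ e => e) ≤ ℓ),
      monomial s (coeff s p) with hq
  have hqmem : q ∈ restrictTotalDegree (Fin n) ℝ ℓ := by
    refine Submodule.sum_mem _ (fun s hs => ?_)
    rw [Finset.mem_filter] at hs
    rw [mem_restrictTotalDegree]
    exact le_trans (totalDegree_monomial_le s _) hs.2
  refine ⟨⟨q, hqmem⟩, ?_⟩
  have hdiff : p - q ∈ J n ^ (ℓ + 1) := by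
    have hp : p = ∑ s ∈ p.support, monomial s (coeff s p) :=
      (support_sum_monomial_coeff p).symm
    have : p - q = ∑ s ∈ p.support.filter (fun s => ¬ (s.sum fun _ e => e) ≤ ℓ),
        monomial s (coeff s p) := by
      conv_lhs => rw [hp, hq]
      rw [← Finset.sum_filter_add_sum_filter_not p.support
        (fun s => (s.sum fun _ e => e) ≤ ℓ) (fun s => monomial s (coeff s p))]
      ring
    rw [this]
    refine Ideal.sum_mem _ (fun s hs => ?_)
    rw [Finset.mem_filter] at hs
    exact monomial_mem_J_pow s _ _ (by omega)
  have := π_ker (ℓ := ℓ) (p - q) hdiff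
  rw [map_sub, sub_eq_zero] at this
  exact this.symm


section Homs
variable {A : Type*} [CommRing A] [Algebra ℝ A] [Nontrivial A]

lemma nilp_image {φ : Rnl n ℓ →ₐ[ℝ] A} {z : Rnl n ℓ} (hz : z ∈ Mi n ℓ) :
    IsNilpotent (φ z) := by
  refine ⟨ℓ + 1, ?_⟩
  rw [← map_pow]
  have : z ^ (ℓ + 1) ∈ Mi n ℓ ^ (ℓ + 1) := Ideal.pow_mem_pow hz _
  rw [Mi_pow_eq_bot, Ideal.mem_bot] at this
  rw [this, map_zero]

/-- the images of the maximal ideal under any two surjective algebra homs agree -/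
lemma map_Mi_eq (φ ψ : Rnl n ℓ →ₐ[ℝ] A)
    (hψ : Function.Surjective ψ) :
    (Mi n ℓ).map (φ : Rnl n ℓ →+* A) ≤ (Mi n ℓ).map (ψ : Rnl n ℓ →+* A) := by
  rw [Ideal.map_le_iff_le_comap]
  intro z hz
  rw [Ideal.mem_comap]
  rw [Ideal.mem_map_iff_of_surjective (ψ : Rnl n ℓ →+* A) (fun y => hψ y)]
  obtain ⟨z', hz'⟩ := hψ (φ z)
  obtain ⟨c, m, hm, rfl⟩ := exists_decomp z'
  have h1 : IsNilpotent (φ z) := nilp_image hz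
  have h2 : IsNilpotent (ψ m) := nilp_image hm
  have h3 : IsNilpotent (algebraMap ℝ A c) := by
    have : algebraMap ℝ A c = φ z - ψ m := by
      rw [← hz', map_add]
      have : ψ (algebraMap ℝ _ c) = algebraMap ℝ A c := ψ.commutes c
      rw [this]; ring
    rw [this]
    exact Commute.isNilpotent_sub (Commute.all _ _) h1 h2
  have hc : c = 0 := by
    obtain ⟨k, hk⟩ := h3
    rw [← map_pow] at hk
    have hinj : Function.Injective (algebraMap ℝ A) := RingHom.injective _
    have hck : c ^ k = 0 := by
      apply hinj; rw [hk, map_zero]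
    rcases Nat.eq_zero_or_pos k with h0 | h0
    · subst h0; simp at hck
    · exact (pow_eq_zero_iff h0.ne').mp hck
  refine ⟨m, hm, ?_⟩
  show ψ m = φ z
  rw [← hz', map_add, ψ.commutes c, hc, map_zero, zero_add]

end Homs

lemma map_π_J_sq : (J n ^ 2).map (π n ℓ) = Mi n ℓ ^ 2 := by
  rw [Mi, Ideal.map_pow]

lemma decomp_Mi {x : Rnl n ℓ} (hx : x ∈ Mi n ℓ) :
    ∃ a : Fin n → ℝ, x - ∑ i, a i • π n ℓ (X i) ∈ Mi n ℓ ^ 2 := by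
  obtain ⟨p, hp, rfl⟩ := mem_Mi_iff.mp hx
  rw [J, Ideal.mem_span_range_iff_exists_fun] at hp
  obtain ⟨c, hc⟩ := hp
  refine ⟨fun i => constantCoeff (c i), ?_⟩
  have key : p - ∑ i, constantCoeff (c i) • X i =
      ∑ i, (c i - C (constantCoeff (c i))) * X i := by
    rw [← hc, ← Finset.sum_sub_distrib]
    congr 1; funext i
    rw [sub_mul]
    congr 1
    rw [MvPolynomial.smul_eq_C_mul]
  have hmem : p - ∑ i, constantCoeff (c i) • X i ∈ J n ^ 2 := by
    rw [key]
    refine Ideal.sum_mem _ (fun i _ => ?_)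
    rw [pow_two]
    exact Ideal.mul_mem_mul (sub_C_mem_J (c i)) (Ideal.subset_span (mem_range_self i))
  have := Ideal.mem_map_of_mem (π n ℓ) hmem
  rw [map_π_J_sq] at this
  simpa [map_sub, map_sum] using this

section Homs
variable {A : Type*} [CommRing A] [Algebra ℝ A] [Nontrivial A]
variable (α β : Rnl n ℓ →ₐ[ℝ] A)

lemma spanning (hα : Function.Surjective α) (hβ : Function.Surjective β) (v : Fin n → Rnl n ℓ)
    (hvM : ∀ i, v i ∈ Mi n ℓ) (hvα : ∀ i, α (v i) = β (π n ℓ (X i)))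
    {x : Rnl n ℓ} (hx : x ∈ Mi n ℓ) :
    x ∈ span ℝ (range v) ⊔ restrictScalars ℝ (Mi n ℓ ^ 2) ⊔
        restrictScalars ℝ (RingHom.ker (α : Rnl n ℓ →+* A)) := by
  have h1 : α x ∈ (Mi n ℓ).map (β : Rnl n ℓ →+* A) :=
    map_Mi_eq α β hβ (Ideal.mem_map_of_mem _ hx)
  rw [Ideal.mem_map_iff_of_surjective (β : Rnl n ℓ →+* A) (fun y => hβ y)] at h1
  obtain ⟨y, hy, hyx⟩ := h1
  obtain ⟨a, hz⟩ := decomp_Mi hy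
  set z := y - ∑ i, a i • π n ℓ (X i) with hzdef
  have hβy : β y = ∑ i, a i • α (v i) + β z := by
    have : y = (∑ i, a i • π n ℓ (X i)) + z := by rw [hzdef]; abel
    rw [this, map_add, map_sum]
    congr 1
    refine Finset.sum_congr rfl (fun i _ => ?_)
    rw [map_smul, hvα i]
  have hβz : (β : Rnl n ℓ →+* A) z ∈ (Mi n ℓ ^ 2).map (α : Rnl n ℓ →+* A) := by
    have h2 : (β : Rnl n ℓ →+* A) z ∈ (Mi n ℓ ^ 2).map (β : Rnl n ℓ →+* A) :=
      Ideal.mem_map_of_mem _ hz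
    have h3 : (Mi n ℓ ^ 2).map (β : Rnl n ℓ →+* A) ≤
        (Mi n ℓ ^ 2).map (α : Rnl n ℓ →+* A) := by
      rw [Ideal.map_pow, Ideal.map_pow,
        le_antisymm (map_Mi_eq β α hα) (map_Mi_eq α β hβ)]
    exact h3 h2
  rw [Ideal.mem_map_iff_of_surjective (α : Rnl n ℓ →+* A) (fun y => hα y)] at hβz
  obtain ⟨u, hu, huz⟩ := hβz
  have hker : x - (∑ i, a i • v i) - u ∈ RingHom.ker (α : Rnl n ℓ →+* A) := by
    rw [RingHom.mem_ker]
    show α _ = 0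
    rw [map_sub, map_sub, map_sum]
    have : ∑ i, α (a i • v i) = ∑ i, a i • α (v i) := by
      refine Finset.sum_congr rfl (fun i _ => ?_)
      rw [map_smul]
    rw [this]
    have huz' : α u = β z := huz
    have hyx' : β y = α x := hyx
    rw [← hyx', hβy, huz']
    abel
  have hx1 : (∑ i, a i • v i) ∈ span ℝ (range v) :=
    Submodule.sum_mem _ (fun i _ => Submodule.smul_mem _ _ (subset_span (mem_range_self i)))
  have : x = (∑ i, a i • v i) + u + (x - (∑ i, a i • v i) - u) := by abel
  rw [this]
  refine add_mem (add_mem ?_ ?_) ?_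
  · exact Submodule.mem_sup_left (Submodule.mem_sup_left hx1)
  · exact Submodule.mem_sup_left (Submodule.mem_sup_right hu)
  · exact Submodule.mem_sup_right hker

end Homs

/-- the restriction of scalars of the maximal ideal -/
noncomputable def mres (n ℓ : ℕ) : Submodule ℝ (Rnl n ℓ) :=
  Submodule.restrictScalars ℝ (Mi n ℓ)

lemma sq_le_mres_mul : Submodule.restrictScalars ℝ (Mi n ℓ ^ 2) ≤ mres n ℓ * mres n ℓ := by
  intro x hx
  have hx' : x ∈ Mi n ℓ * Mi n ℓ := by
    have h2 : Mi n ℓ ^ 2 = Mi n ℓ * Mi n ℓ := by rw [Submodule.pow_succ (Mi n ℓ), Submodule.pow_one]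
    rw [← h2]; exact hx
  refine Submodule.mul_induction_on hx' (fun a ha b hb => ?_) (fun a b ha hb => add_mem ha hb)
  exact Submodule.mul_mem_mul ha hb

lemma mres_pow_le (k : ℕ) : mres n ℓ ^ k ≤ restrictScalars ℝ (Mi n ℓ ^ k) := by
  induction k with
  | zero => simp
  | succ k ih =>
      have h1 : mres n ℓ ^ (k + 1) = mres n ℓ ^ k * mres n ℓ := Submodule.pow_succ (mres n ℓ)
      have h2 : Mi n ℓ ^ (k + 1) = Mi n ℓ ^ k * Mi n ℓ := Submodule.pow_succ _
      rw [h1, h2]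
      refine Submodule.mul_le.mpr (fun a ha b hb => ?_)
      exact Ideal.mul_mem_mul (ih ha) hb

lemma mres_pow_bot : mres n ℓ ^ (ℓ + 1) = ⊥ := by
  refine le_bot_iff.mp ?_
  refine (mres_pow_le (ℓ + 1)).trans ?_
  rw [Mi_pow_eq_bot]
  intro x hx
  simpa using hx

/-- the Nakayama-type argument: a subalgebra containing a family spanning `𝔪` mod `𝔪²`
is everything. -/
lemma subalgebra_eq_top (T : Subalgebra ℝ (Rnl n ℓ)) (b : Fin n → Rnl n ℓ)
    (hbT : ∀ i, b i ∈ T) (hbM : ∀ i, b i ∈ Mi n ℓ)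
    (hsp : mres n ℓ ≤ span ℝ (range b) ⊔ mres n ℓ * mres n ℓ) :
    ∀ z, z ∈ T := by
  set L : Submodule ℝ (Rnl n ℓ) := span ℝ (range b) with hL
  set T' : Submodule ℝ (Rnl n ℓ) := Subalgebra.toSubmodule T with hT'
  have hLT : L ≤ T' := span_le.mpr (range_subset_iff.mpr hbT)
  have hLM : L ≤ mres n ℓ := span_le.mpr (range_subset_iff.mpr hbM)
  have mcomm : ∀ P Q : Submodule ℝ (Rnl n ℓ), P * Q = Q * P := fun P Q =>
    Submodule.mul_comm_of_commute (fun m _ n _ => mul_comm m n)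
  have massoc : ∀ P Q S : Submodule ℝ (Rnl n ℓ), P * Q * S = P * (Q * S) :=
    fun P Q S => mul_assoc P Q S
  have F : ∀ k, mres n ℓ ^ k ≤ T' ⊔ mres n ℓ ^ (k + 1) := by
    intro k
    induction k with
    | zero =>
        have h0 : mres n ℓ ^ 0 = 1 := Submodule.pow_zero (mres n ℓ)
        rw [h0]
        refine le_sup_left.trans' ?_
        rw [Submodule.one_le]
        exact T.one_mem
    | succ k ih =>
        have h1 : mres n ℓ ^ (k + 1) = mres n ℓ * mres n ℓ ^ k := by
          rw [Submodule.pow_succ (mres n ℓ), mcomm]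
        rw [h1]
        calc mres n ℓ * mres n ℓ ^ k
            ≤ (L ⊔ mres n ℓ * mres n ℓ) * mres n ℓ ^ k :=
              mul_le_mul_left hsp _
          _ = L * mres n ℓ ^ k ⊔ (mres n ℓ * mres n ℓ) * mres n ℓ ^ k :=
              Submodule.sup_mul _ _ _
          _ ≤ T' ⊔ mres n ℓ ^ (k + 1 + 1) := by
              refine sup_le ?_ ?_
              · calc L * mres n ℓ ^ k
                    ≤ L * (T' ⊔ mres n ℓ ^ (k + 1)) := mul_le_mul_right ih _
                  _ = L * T' ⊔ L * mres n ℓ ^ (k + 1) := Submodule.mul_sup _ _ _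
                  _ ≤ T' ⊔ mres n ℓ ^ (k + 1 + 1) := by
                      refine sup_le ?_ ?_
                      · refine le_sup_left.trans' ?_
                        calc L * T' ≤ T' * T' := mul_le_mul_left hLT _
                          _ = T' := (Subalgebra.isIdempotentElem_toSubmodule T).eq
                      · refine le_sup_right.trans' ?_
                        calc L * mres n ℓ ^ (k + 1)
                            ≤ mres n ℓ * mres n ℓ ^ (k + 1) :=
                              mul_le_mul_left hLM _
                          _ = mres n ℓ ^ (k + 1 + 1) := by
                              rw [Submodule.pow_succ (mres n ℓ) (n := k + 1), mcomm]
              · refine le_sup_right.trans' ?_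
                have h2 : mres n ℓ * mres n ℓ * mres n ℓ ^ k = mres n ℓ ^ (k + 1 + 1) := by
                  rw [Submodule.pow_succ (mres n ℓ) (n := k + 1),
                    Submodule.pow_succ (mres n ℓ) (n := k),
                    mcomm (mres n ℓ * mres n ℓ) (mres n ℓ ^ k), ← massoc]
                rw [h2]
  have G : ∀ k, mres n ℓ ≤ T' ⊔ mres n ℓ ^ (k + 1) := by
    intro k
    induction k with
    | zero =>
        have h0 : mres n ℓ ^ (0 + 1) = mres n ℓ := Submodule.pow_one _
        rw [h0]; exact le_sup_right
    | succ k ih =>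
        refine ih.trans (sup_le le_sup_left ((F (k + 1)).trans ?_))
        exact sup_le le_sup_left le_sup_right
  have hMT : mres n ℓ ≤ T' := by
    have := G ℓ
    rw [mres_pow_bot] at this
    simpa using this
  intro z
  obtain ⟨c, m, hm, rfl⟩ := exists_decomp z
  exact T.add_mem (T.algebraMap_mem c) (hMT hm)


section Main
variable {A : Type*} [CommRing A] [Algebra ℝ A] [Nontrivial A]

lemma ker_le_Mi (α : Rnl n ℓ →ₐ[ℝ] A) :
    Submodule.restrictScalars ℝ (RingHom.ker (α : Rnl n ℓ →+* A)) ≤ mres n ℓ := by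
  intro z hz
  have hz0 : α z = 0 := hz
  obtain ⟨c, m, hm, rfl⟩ := exists_decomp z
  have h2 : IsNilpotent (α m) := nilp_image hm
  have h3 : IsNilpotent (algebraMap ℝ A c) := by
    have : algebraMap ℝ A c = - α m := by
      have := hz0
      rw [map_add, α.commutes c] at this
      linear_combination this
    rw [this]
    exact h2.neg
  have hc : c = 0 := by
    obtain ⟨k, hk⟩ := h3
    rw [← map_pow] at hk
    have hinj : Function.Injective (algebraMap ℝ A) := RingHom.injective _
    have hck : c ^ k = 0 := by apply hinj; rw [hk, map_zero]
    rcases Nat.eq_zero_or_pos k with h0 | h0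
    · subst h0; simp at hck
    · exact (pow_eq_zero_iff h0.ne').mp hck
  show algebraMap ℝ _ c + m ∈ Mi n ℓ
  rw [hc, map_zero, zero_add]
  exact hm

theorem main (α : Rnl n ℓ →ₐ[ℝ] A) (hα : Function.Surjective α)
    (β : Rnl n ℓ →ₐ[ℝ] A) (hβ : Function.Surjective β) :
    ∃ g : Rnl n ℓ ≃ₐ[ℝ] Rnl n ℓ, ∀ x, β x = α (g x) := by
  haveI : Module.Finite ℝ (Rnl n ℓ) := finite_Rnl
  -- choose preimages v i of β (x i) inside the maximal ideal
  have hv : ∀ i : Fin n, ∃ v ∈ Mi n ℓ, α v = β (π n ℓ (X i)) := by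
    intro i
    have h1 : β (π n ℓ (X i)) ∈ (Mi n ℓ).map (β : Rnl n ℓ →+* A) :=
      Ideal.mem_map_of_mem _ (xq_mem_Mi i)
    have h2 := map_Mi_eq β α hα h1
    rwa [Ideal.mem_map_iff_of_surjective (α : Rnl n ℓ →+* A) (fun y => hα y)] at h2
  choose v hvM hvα using hv
  -- the quotient by 𝔪²
  set 𝔪₂ : Submodule ℝ (Rnl n ℓ) := restrictScalars ℝ (Mi n ℓ ^ 2) with h𝔪₂
  set π2 : Rnl n ℓ →ₗ[ℝ] (Rnl n ℓ ⧸ 𝔪₂) := 𝔪₂.mkQ with hπ2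
  set V' : Submodule ℝ (Rnl n ℓ ⧸ 𝔪₂) := (mres n ℓ).map π2 with hV'
  set K : Submodule ℝ (Rnl n ℓ ⧸ 𝔪₂) :=
    (Submodule.restrictScalars ℝ (RingHom.ker (α : Rnl n ℓ →+* A))).map π2 with hK
  have hKV : K ≤ V' := Submodule.map_mono (ker_le_Mi α)
  -- finrank bound
  have hV'le : V' ≤ span ℝ (range fun i => π2 (π n ℓ (X i))) := by
    rintro - ⟨x, hx, rfl⟩
    obtain ⟨a, ha⟩ := decomp_Mi hx
    have : π2 (x - ∑ i, a i • π n ℓ (X i)) = 0 := by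
      rw [Submodule.mkQ_apply, Submodule.Quotient.mk_eq_zero]
      exact ha
    have hx2 : π2 x = ∑ i, a i • π2 (π n ℓ (X i)) := by
      rw [map_sub] at this
      rw [sub_eq_zero] at this
      rw [this, map_sum]
      refine Finset.sum_congr rfl (fun i _ => ?_)
      rw [map_smul]
    rw [hx2]
    exact Submodule.sum_mem _ (fun i _ =>
      Submodule.smul_mem _ _ (subset_span (mem_range_self i)))
  have hfr : finrank ℝ V' ≤ n := by
    classical
    calc finrank ℝ V' ≤ finrank ℝ (span ℝ (range fun i => π2 (π n ℓ (X i)))) :=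
          Submodule.finrank_mono hV'le
      _ ≤ n := by
          refine (finrank_span_le_card _).trans ?_
          rw [Set.toFinset_range]
          exact (Finset.card_image_le).trans (by simp)
  -- spanning hypothesis
  have hsp0 : span ℝ (range fun i => π2 (v i)) ⊔ K = V' := by
    apply le_antisymm
    · refine sup_le ?_ hKV
      rw [span_le]
      rintro - ⟨i, rfl⟩
      exact ⟨v i, hvM i, rfl⟩
    · rintro - ⟨x, hx, rfl⟩
      have := spanning α β hα hβ v hvM hvα hx
      have himg := Submodule.mem_map_of_mem (f := π2) this
      rw [Submodule.map_sup, Submodule.map_sup] at himg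
      have hbot : Submodule.map π2 𝔪₂ = ⊥ := by
        rw [eq_bot_iff]
        rintro - ⟨y, hy, rfl⟩
        simp only [Submodule.mem_bot]
        rw [hπ2, Submodule.mkQ_apply, Submodule.Quotient.mk_eq_zero]
        exact hy
      rw [hbot] at himg
      have hspeq : Submodule.map π2 (span ℝ (range v)) =
          span ℝ (range fun i => π2 (v i)) := by
        rw [Submodule.map_span, ← Set.range_comp]
        rfl
      rw [hspeq] at himg
      simpa using himg
  -- apply the linear algebra lemma
  obtain ⟨w, hwK, hwspan⟩ := la_lemma V' K hKV hfr (finrank ℝ V')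
    (fun i => π2 (v i)) (fun i => ⟨v i, hvM i, rfl⟩) hsp0 (by omega)
  -- lift w to the ring
  have hw' : ∀ i, ∃ wr ∈ Submodule.restrictScalars ℝ (RingHom.ker (α : Rnl n ℓ →+* A)),
      π2 wr = w i := fun i => hwK i
  choose wr hwr hwrπ using hw'
  set b : Fin n → Rnl n ℓ := fun i => v i + wr i with hb
  have hbM : ∀ i, b i ∈ Mi n ℓ := fun i =>
    (Mi n ℓ).add_mem (hvM i) (ker_le_Mi α (hwr i))
  have hαb : ∀ i, α (b i) = β (π n ℓ (X i)) := by
    intro i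
    have : α (wr i) = 0 := hwr i
    rw [hb]
    simp only [map_add, this, add_zero]
    exact hvα i
  -- span condition in the ring
  have hsp : mres n ℓ ≤ span ℝ (range b) ⊔ mres n ℓ * mres n ℓ := by
    intro x hx
    have hπx : π2 x ∈ span ℝ (range fun i => π2 (b i)) := by
      have : (fun i => π2 (b i)) = fun i => π2 (v i) + w i := by
        funext i
        rw [hb, map_add, hwrπ i]
      rw [this, hwspan]
      exact ⟨x, hx, rfl⟩
    have hmap : span ℝ (range fun i => π2 (b i)) =
        Submodule.map π2 (span ℝ (range b)) := by
      rw [Submodule.map_span, ← Set.range_comp]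
      rfl
    rw [hmap] at hπx
    obtain ⟨y, hy, hyx⟩ := hπx
    have hxy : x - y ∈ 𝔪₂ := by
      rw [← Submodule.Quotient.mk_eq_zero (p := 𝔪₂), ← Submodule.mkQ_apply, map_sub,
        hyx, sub_self]
    have : x = y + (x - y) := by abel
    rw [this]
    exact Submodule.add_mem _ (Submodule.mem_sup_left hy)
      (Submodule.mem_sup_right (sq_le_mres_mul hxy))
  -- construct the endomorphism
  have hgwd : ∀ p ∈ J n ^ (ℓ + 1), (aeval b : MvPolynomial (Fin n) ℝ →ₐ[ℝ] Rnl n ℓ) p = 0 := by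
    intro p hp
    have h1 : Ideal.map (aeval b : MvPolynomial (Fin n) ℝ →ₐ[ℝ] Rnl n ℓ) (J n) ≤ Mi n ℓ := by
      rw [J, Ideal.map_span]
      rw [Ideal.span_le]
      rintro - ⟨-, ⟨i, rfl⟩, rfl⟩
      simpa using hbM i
    have h2 : Ideal.map (aeval b : MvPolynomial (Fin n) ℝ →ₐ[ℝ] Rnl n ℓ) (J n ^ (ℓ + 1)) ≤
        Mi n ℓ ^ (ℓ + 1) := by
      rw [Ideal.map_pow]
      exact Ideal.pow_right_mono h1 _
    have h3 := h2 (Ideal.mem_map_of_mem _ hp)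
    rw [Mi_pow_eq_bot, Ideal.mem_bot] at h3
    exact h3
  set g : Rnl n ℓ →ₐ[ℝ] Rnl n ℓ := Ideal.Quotient.liftₐ (J n ^ (ℓ + 1)) (aeval b) hgwd with hg
  have hgx : ∀ i, g (π n ℓ (X i)) = b i := by
    intro i
    have h := AlgHom.congr_fun (Ideal.Quotient.liftₐ_comp (J n ^ (ℓ + 1)) (aeval b) hgwd) (X i)
    rw [AlgHom.comp_apply] at h
    show Ideal.Quotient.liftₐ (J n ^ (ℓ + 1)) (aeval b) hgwd
      ((Ideal.Quotient.mkₐ ℝ (J n ^ (ℓ + 1))) (X i)) = b i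
    rw [h, aeval_X]
  -- surjectivity
  have hbT : ∀ i, b i ∈ g.range := fun i => ⟨π n ℓ (X i), hgx i⟩
  have hsurj : Function.Surjective g := by
    intro z
    exact subalgebra_eq_top g.range b hbT hbM hsp z
  -- injectivity
  have hinj : Function.Injective g := by
    have : Function.Injective g.toLinearMap := by
      rw [LinearMap.injective_iff_surjective_of_finrank_eq_finrank rfl]
      exact hsurj
    exact this
  -- assemble
  refine ⟨AlgEquiv.ofBijective g ⟨hinj, hsurj⟩, ?_⟩
  have hcomp : α.comp g = β := by
    apply Ideal.Quotient.algHom_ext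
    apply MvPolynomial.algHom_ext
    intro i
    show α (g (π n ℓ (X i))) = β (π n ℓ (X i))
    rw [hgx i, hαb i]
  intro x
  have := AlgHom.congr_fun hcomp x
  rw [← this]
  rfl

end Main

end WeilAux


/-- Given a fixed surjection `α : ℝ_n^ℓ → A` onto a Weil algebra of order `ℓ`
and width `m ≤ n`, every surjection `β : ℝ_n^ℓ → A` factors as `β = α ∘ g` for some
ℝ-algebra automorphism `g` of `ℝ_n^ℓ`. -/
theorem surjection_factors_through_automorphism
    (A : Type*) [CommRing A] [Algebra ℝ A] [IsLocalRing A] [FiniteDimensional ℝ A]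
    (hres : Function.Bijective (algebraMap ℝ (ResidueField A)))
    (ℓ m n : ℕ)
    (horder : maximalIdeal A ^ (ℓ + 1) = ⊥)
    (horder_min : ∀ k : ℕ, k < ℓ → maximalIdeal A ^ (k + 1) ≠ ⊥)
    (hwidth : m =
      Module.finrank ℝ
        ((Submodule.restrictScalars ℝ (maximalIdeal A)) ⧸
          (Submodule.comap (Submodule.restrictScalars ℝ (maximalIdeal A)).subtype
            (Submodule.restrictScalars ℝ (maximalIdeal A ^ 2)))))
    (hn : m ≤ n)
    (α : Rnl n ℓ →ₐ[ℝ] A) (hα : Function.Surjective α)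
    (β : Rnl n ℓ →ₐ[ℝ] A) (hβ : Function.Surjective β) :
    ∃ g : Rnl n ℓ ≃ₐ[ℝ] Rnl n ℓ, ∀ x, β x = α (g x) := by
  exact WeilAux.main α hα β hβ
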